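/- Let k be a field of characteristic exponent p (p = char k if char k > 0, and p = 1 if char k = 0), and let f ∈ k[x] be monic and irreducible. Write f(x) = f_sep(x^{p^e}) where e ≥ 0 is the degree of inseparability of f and f_sep ∈ k[x] is separable. Then tol(f) = disc(f_sep)^{p^e}. -/

import Mathlib

open Polynomial
open scoped Classical

/-- The tolerant of a polynomial `f` over a field `K` (intended: `K` an algebraic closure and
`f` the image of a polynomial over a subfield): writing `f = a_n ∏ (X - r_i)^{m_i}` with
`r_1, …, r_s` distinct, `tol f = a_n^{2n-2} ∏_{i<j} (r_i - r_j)^{2 m_i m_j}`.  The product is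
taken over unordered pairs of distinct roots; this is well defined since the exponents are even. -/
noncomputable def tol {K : Type*} [Field K] (f : K[X]) : K :=
  f.leadingCoeff ^ (2 * (f.natDegree : ℤ) - 2) *
    ∏ p ∈ f.roots.toFinset.sym2.filter (fun p => ¬ p.IsDiag),
      Sym2.lift ⟨fun a b => ((a - b) ^ 2) ^ (f.rootMultiplicity a * f.rootMultiplicity b),
        fun a b => by
          dsimp only
          rw [mul_comm (rootMultiplicity a f), show (a - b) ^ 2 = (b - a) ^ 2 by ring]⟩ p

/-- The discriminant of `g`: with roots `α_1, …, α_m ∈ K` listed with multiplicity,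
`disc g = lc(g)^{2m-2} ∏_{i<j} (α_i - α_j)^2` (well defined: the factors are symmetric). -/
noncomputable def disc {K : Type*} [Field K] (g : K[X]) : K :=
  g.leadingCoeff ^ (2 * (g.natDegree : ℤ) - 2) *
    ∏ ij ∈ Finset.univ.filter
        (fun ij : Fin g.roots.toList.length × Fin g.roots.toList.length => ij.1 < ij.2),
      (g.roots.toList.get ij.1 - g.roots.toList.get ij.2) ^ 2

theorem tol_comp_eq_disc_pow {K : Type*} [Field K] [IsAlgClosed K]
    (q : ℕ) (hq0 : 0 < q)
    (hpoly : ∀ r : K, (X - C r : K[X]) ^ q = X ^ q - C (r ^ q))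
    (G : K[X]) (hG : G.Monic) (hnd : G.roots.Nodup) :
    tol (G.comp (X ^ q)) = disc G ^ q := by
  classical
  set F := G.comp (X ^ q) with hFdef
  have hq : ∀ a b : K, (a - b) ^ q = a ^ q - b ^ q := by
    intro a b
    have h := congrArg (eval a) (hpoly b)
    simpa using h
  obtain ⟨ε, hε⟩ : ∃ ε : K → K, ∀ a : K, (ε a) ^ q = a := by
    choose ε hε using fun a : K => IsAlgClosed.exists_pow_nat_eq a hq0
    exact ⟨ε, hε⟩
  have hεinj : Function.Injective ε := by
    intro a b h
    rw [← hε a, ← hε b, h]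
  have hGprod : G = (G.roots.map fun a => X - C a).prod :=
    (IsAlgClosed.splits G).eq_prod_roots_of_monic hG
  have hFprod : F = (G.roots.map fun a => (X - C (ε a)) ^ q).prod := by
    conv_lhs => rw [hFdef, hGprod]
    rw [multiset_prod_comp, Multiset.map_map]
    apply congrArg
    apply Multiset.map_congr rfl
    intro a _
    simp only [Function.comp_apply, sub_comp, X_comp, C_comp]
    rw [hpoly (ε a), hε a]
  have key : ∀ S : Multiset K,
      ((S.map fun a => (X - C (ε a)) ^ q).prod).roots = q • S.map ε := by
    intro S
    induction S using Multiset.induction_on with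
    | empty => simp
    | cons a s ih =>
      rw [Multiset.map_cons, Multiset.prod_cons, roots_mul, ih, roots_pow, roots_X_sub_C,
        Multiset.map_cons, ← Multiset.singleton_add, smul_add]
      refine mul_ne_zero (pow_ne_zero _ (X_sub_C_ne_zero _)) ?_
      exact (monic_multiset_prod_of_monic _ _
        (fun b _ => (monic_X_sub_C (ε b)).pow q)).ne_zero
  have hFroots : F.roots = q • G.roots.map ε := by rw [hFprod]; exact key G.roots
  have mapnodup : (G.roots.map ε).Nodup := hnd.map hεinj
  have hFlc : F.leadingCoeff = 1 := by
    rw [hFdef, leadingCoeff_comp (by simp [hq0.ne']), hG.leadingCoeff,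
      (monic_X_pow q).leadingCoeff, one_pow, one_mul]
  have htoF : F.roots.toFinset = G.roots.toFinset.image ε := by
    rw [hFroots, Multiset.toFinset_nsmul _ q hq0.ne', Multiset.toFinset_map]
  have hmult : ∀ a ∈ G.roots, rootMultiplicity (ε a) F = q := by
    intro a ha
    rw [← count_roots, hFroots, Multiset.count_nsmul,
      Multiset.count_eq_one_of_mem mapnodup (Multiset.mem_map_of_mem ε ha), mul_one]
  set l := G.roots.toList with hldef
  have hl : l.Nodup := by rw [hldef, ← Multiset.coe_nodup, Multiset.coe_toList]; exact hnd
  have hlmem : ∀ i : Fin l.length, l.get i ∈ G.roots := by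
    intro i
    rw [← Multiset.mem_toList]
    exact l.get_mem _
  unfold tol disc
  rw [hFlc, hG.leadingCoeff, one_zpow, one_zpow, one_mul, one_mul, ← Finset.prod_pow]
  refine (Finset.prod_bij
    (fun (ij : Fin l.length × Fin l.length) _ => s(ε (l.get ij.1), ε (l.get ij.2)))
    ?_ ?_ ?_ ?_).symm
  · rintro ⟨i, j⟩ hij
    rw [Finset.mem_filter] at hij ⊢
    have hij' : i < j := hij.2
    constructor
    · rw [Finset.mk_mem_sym2_iff, htoF]
      constructor <;> exact Finset.mem_image_of_mem ε (Multiset.mem_toFinset.mpr (hlmem _))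
    · rw [Sym2.mk_isDiag_iff]
      intro h
      exact absurd (hl.get_inj_iff.mp (hεinj h)) (Fin.ne_of_lt hij')
  · rintro ⟨i, j⟩ hij ⟨i', j'⟩ hij' h
    rw [Finset.mem_filter] at hij hij'
    rw [Sym2.eq_iff] at h
    rcases h with ⟨h1, h2⟩ | ⟨h1, h2⟩
    · exact Prod.ext_iff.mpr ⟨hl.get_inj_iff.mp (hεinj h1), hl.get_inj_iff.mp (hεinj h2)⟩
    · exfalso
      have e1 : i = j' := hl.get_inj_iff.mp (hεinj h1)
      have e2 : j = i' := hl.get_inj_iff.mp (hεinj h2)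
      subst e1
      subst e2
      exact absurd (hij.2.trans hij'.2) (lt_irrefl _)
  · intro z hz
    induction z using Sym2.ind with
    | _ x y =>
      rw [Finset.mem_filter, Finset.mk_mem_sym2_iff, htoF] at hz
      obtain ⟨⟨hx, hy⟩, hdiag⟩ := hz
      rw [Finset.mem_image] at hx hy
      obtain ⟨a, ha, rfl⟩ := hx
      obtain ⟨b, hb, rfl⟩ := hy
      rw [Sym2.mk_isDiag_iff] at hdiag
      have hab : a ≠ b := fun h => hdiag (by rw [h])
      rw [Multiset.mem_toFinset, ← Multiset.mem_toList, ← hldef, List.mem_iff_get] at ha hb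
      obtain ⟨i, hi⟩ := ha
      obtain ⟨j, hj⟩ := hb
      have hij : i ≠ j := fun h => hab (by rw [← hi, ← hj, h])
      rcases hij.lt_or_gt with h | h
      · exact ⟨(i, j), Finset.mem_filter.mpr ⟨Finset.mem_univ _, h⟩, by
          show s(ε (l.get i), ε (l.get j)) = s(ε a, ε b)
          rw [hi, hj]⟩
      · exact ⟨(j, i), Finset.mem_filter.mpr ⟨Finset.mem_univ _, h⟩, by
          show s(ε (l.get j), ε (l.get i)) = s(ε a, ε b)
          rw [hi, hj]; exact Sym2.eq_swap⟩
  · rintro ⟨i, j⟩ hij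
    rw [Sym2.lift_mk]
    dsimp only
    rw [hmult _ (hlmem i), hmult _ (hlmem j)]
    have hx : (ε (l.get i) - ε (l.get j)) ^ q = l.get i - l.get j := by
      rw [hq, hε, hε]
    calc ((l.get i - l.get j) ^ 2) ^ q
        = (((ε (l.get i) - ε (l.get j)) ^ q) ^ 2) ^ q := by rw [hx]
      _ = ((ε (l.get i) - ε (l.get j)) ^ 2) ^ (q * q) := by
          rw [← pow_mul, ← pow_mul, ← pow_mul]
          congr 1
          ring

/-- Let `k` have characteristic exponent `p` (`p = char k` if `char k > 0`, else `p = 1`), and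
let `f ∈ k[x]` be monic and irreducible, with `f(x) = f_sep(x^{p^e})` where `e` is the degree of
inseparability of `f` (minimal such exponent) and `f_sep` is separable.
Then `tol f = disc(f_sep)^{p^e}`. -/
theorem tol_irreducible_eq_disc_pow {k : Type*} [Field k]
    (p : ℕ) (hp : p = if ringChar k = 0 then 1 else ringChar k)
    (f fsep : k[X]) (hmonic : f.Monic) (hirr : Irreducible f)
    (e : ℕ) (hsep : fsep.Separable) (hf : f = fsep.comp (X ^ p ^ e))
    (hmin : ∀ e' : ℕ, (∃ g : k[X], g.Separable ∧ f = g.comp (X ^ p ^ e')) → e ≤ e') :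
    tol (f.map (algebraMap k (AlgebraicClosure k))) =
      disc (fsep.map (algebraMap k (AlgebraicClosure k))) ^ p ^ e := by
  classical
  set K := AlgebraicClosure k
  set σ := algebraMap k K with hσ
  have hp1 : 0 < p := by
    rw [hp]; split_ifs with h
    · exact one_pos
    · exact Nat.pos_of_ne_zero h
  set q := p ^ e with hqdef
  have hq0 : 0 < q := pow_pos hp1 e
  have hXq : (X ^ q : k[X]).natDegree ≠ 0 := by simp [hq0.ne']
  have hfsm : fsep.Monic := by
    have h1 : f.leadingCoeff = 1 := hmonic
    rw [hf, leadingCoeff_comp hXq, (monic_X_pow q).leadingCoeff, one_pow, mul_one] at h1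
    exact h1
  have hGm : (fsep.map σ).Monic := hfsm.map σ
  have hnd : (fsep.map σ).roots.Nodup := nodup_roots hsep.map
  have hpoly : ∀ r : K, (X - C r : K[X]) ^ q = X ^ q - C (r ^ q) := by
    by_cases hc : ringChar k = 0
    · have hp' : p = 1 := by rw [hp, if_pos hc]
      have hq1 : q = 1 := by rw [hqdef, hp', one_pow]
      intro r
      simp [hq1]
    · have hcp : (ringChar k).Prime := (CharP.char_is_prime_or_zero k (ringChar k)).resolve_right hc
      haveI : CharP K (ringChar k) :=
        charP_of_injective_algebraMap (algebraMap k K).injective (ringChar k)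
      haveI : Fact (ringChar k).Prime := ⟨hcp⟩
      have hpc : p = ringChar k := by rw [hp, if_neg hc]
      intro r
      rw [hqdef, hpc, sub_pow_char_pow, ← C_pow]
  have hmap : f.map σ = (fsep.map σ).comp (X ^ q) := by
    rw [hf, map_comp, Polynomial.map_pow, map_X]
  rw [hmap]
  exact tol_comp_eq_disc_pow q hq0 hpoly _ hGm hnd
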